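/- Let Q and B be real n×n matrices with Q symmetric positive semidefinite. If the Kalman rank condition Rank[Q^{1/2}, BQ^{1/2}, ..., B^{n-1}Q^{1/2}] = n holds, then there exist constants c > 0 and 0 < t₀ ≤ 1 such that for all 0 ≤ t ≤ t₀ and all X ∈ ℝⁿ, ∫₀ᵗ |Q^{1/2} e^{sBᵀ} X|² ds ≥ c t^{2k₀+1} |X|², where k₀ is the smallest integer such that Rank[Q^{1/2}, BQ^{1/2}, ..., B^{k₀}Q^{1/2}] = n. -/

import Mathlib

set_option maxHeartbeats 1000000

open Matrix intervalIntegral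

open scoped ComplexOrder in
/-- The positive semidefinite square root of a positive semidefinite matrix (the definition
removed from Mathlib, restated with its old meaning). -/
noncomputable def Matrix.PosSemidef.sqrt {n 𝕜 : Type*} [Fintype n] [RCLike 𝕜] [DecidableEq n]
    {A : Matrix n n 𝕜} (hA : A.PosSemidef) : Matrix n n 𝕜 :=
  hA.1.eigenvectorUnitary.1 * diagonal ((↑) ∘ (√·) ∘ hA.1.eigenvalues) *
    (star hA.1.eigenvectorUnitary : Matrix n n 𝕜)

/-- The Kalman matrix `[R, BR, ..., B^k R]` obtained by concatenating the columns of the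
matrices `B^j * R` for `j = 0, ..., k`. -/
noncomputable def kalmanMatrix {n : ℕ} (R B : Matrix (Fin n) (Fin n) ℝ) (k : ℕ) :
    Matrix (Fin n) (Fin (k + 1) × Fin n) ℝ :=
  fun i p => (B ^ (p.1 : ℕ) * R) i p.2

/-! ### Auxiliary lemmas -/

section Aux

lemma aux_dot_self_nonneg {ι : Type*} [Fintype ι] (x : ι → ℝ) : 0 ≤ x ⬝ᵥ x :=
  Finset.sum_nonneg fun i _ => mul_self_nonneg (x i)

lemma aux_dot_self_pos {ι : Type*} [Fintype ι] {x : ι → ℝ} (hx : x ≠ 0) : 0 < x ⬝ᵥ x := by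
  rcases Function.ne_iff.mp hx with ⟨i, hi⟩
  have h1 : 0 < x i * x i := mul_self_pos.mpr hi
  have : x i * x i ≤ x ⬝ᵥ x :=
    Finset.single_le_sum (f := fun j => x j * x j) (fun j _ => mul_self_nonneg (x j))
      (Finset.mem_univ i)
  linarith

lemma aux_norm_sq_le_dot {m : ℕ} (x : Fin m → ℝ) : ‖x‖ ^ 2 ≤ x ⬝ᵥ x := by
  have h1 : ‖x‖ ≤ Real.sqrt (x ⬝ᵥ x) := by
    apply pi_norm_le_iff_of_nonneg (Real.sqrt_nonneg _) |>.mpr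
    intro i
    rw [Real.norm_eq_abs, ← Real.sqrt_mul_self_eq_abs]
    apply Real.sqrt_le_sqrt
    exact Finset.single_le_sum (f := fun j => x j * x j) (fun j _ => mul_self_nonneg (x j))
      (Finset.mem_univ i)
  calc ‖x‖ ^ 2 ≤ Real.sqrt (x ⬝ᵥ x) ^ 2 :=
        pow_le_pow_left₀ (norm_nonneg x) h1 2
    _ = x ⬝ᵥ x := Real.sq_sqrt (aux_dot_self_nonneg x)

lemma aux_dot_le_card_norm {m : ℕ} (x : Fin m → ℝ) : x ⬝ᵥ x ≤ (m : ℝ) * ‖x‖ ^ 2 := by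
  have h : ∀ i : Fin m, x i * x i ≤ ‖x‖ ^ 2 := by
    intro i
    have h1 : |x i| ≤ ‖x‖ := by
      rw [← Real.norm_eq_abs]; exact norm_le_pi_norm x i
    have h2 : x i * x i = |x i| ^ 2 := by rw [sq_abs]; ring
    rw [h2]
    exact pow_le_pow_left₀ (abs_nonneg _) h1 2
  calc x ⬝ᵥ x ≤ ∑ _i : Fin m, ‖x‖ ^ 2 := Finset.sum_le_sum fun i _ => h i
    _ = (m : ℝ) * ‖x‖ ^ 2 := by rw [Finset.sum_const]; simp [mul_comm]

/-- A continuous, 2-homogeneous function that is positive away from zero is bounded below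
by a positive multiple of `x ⬝ᵥ x`. -/
lemma coercive_of_posOnSphere {m : ℕ} (g : (Fin m → ℝ) → ℝ) (hcont : Continuous g)
    (hpos : ∀ x : Fin m → ℝ, x ≠ 0 → 0 < g x)
    (hhom : ∀ (r : ℝ) (x : Fin m → ℝ), g (r • x) = r ^ 2 * g x) :
    ∃ δ : ℝ, 0 < δ ∧ ∀ x : Fin m → ℝ, δ * (x ⬝ᵥ x) ≤ g x := by
  have hg0 : g 0 = 0 := by
    have := hhom 0 0
    simpa using this
  have hcd : Continuous (fun x : Fin m → ℝ => x ⬝ᵥ x) := by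
    unfold dotProduct
    exact continuous_finset_sum _ fun i _ => (continuous_apply i).mul (continuous_apply i)
  set S : Set (Fin m → ℝ) := {x | x ⬝ᵥ x = 1} with hS
  rcases S.eq_empty_or_nonempty with hSe | hSne
  · refine ⟨1, one_pos, fun x => ?_⟩
    rcases eq_or_ne x 0 with rfl | hx
    · simp [hg0]
    · exfalso
      have hxx : 0 < x ⬝ᵥ x := aux_dot_self_pos hx
      set r : ℝ := (Real.sqrt (x ⬝ᵥ x))⁻¹ with hr
      have : (r • x) ⬝ᵥ (r • x) = 1 := by
        rw [smul_dotProduct, dotProduct_smul, smul_eq_mul, smul_eq_mul, ← mul_assoc, hr,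
          ← Real.sqrt_mul_self hxx.le]
        field_simp
        rw [Real.sq_sqrt (Real.sqrt_nonneg _)]
      exact Set.eq_empty_iff_forall_notMem.mp hSe (r • x) this
  · have hScpt : IsCompact S := by
      apply Metric.isCompact_of_isClosed_isBounded
      · exact isClosed_eq hcd continuous_const
      · apply Metric.isBounded_iff_subset_closedBall (0 : Fin m → ℝ) |>.mpr
        refine ⟨1, fun x hx => ?_⟩
        rw [Metric.mem_closedBall, dist_zero_right]
        apply pi_norm_le_iff_of_nonneg zero_le_one |>.mpr
        intro i
        rw [Real.norm_eq_abs, abs_le]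
        have hle : x i * x i ≤ 1 := by
          rw [← hx]
          exact Finset.single_le_sum (f := fun j => x j * x j) (fun j _ => mul_self_nonneg (x j))
            (Finset.mem_univ i)
        constructor <;> nlinarith
    obtain ⟨x₀, hx₀S, hx₀min⟩ := hScpt.exists_isMinOn hSne hcont.continuousOn
    have hx₀ne : x₀ ≠ 0 := by
      intro h; rw [h] at hx₀S; simp [hS, zero_dotProduct] at hx₀S
    refine ⟨g x₀, hpos x₀ hx₀ne, fun x => ?_⟩
    rcases eq_or_ne x 0 with rfl | hx
    · simp [hg0]
    · have hxx : 0 < x ⬝ᵥ x := aux_dot_self_pos hx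
      set r : ℝ := Real.sqrt (x ⬝ᵥ x) with hr
      have hrpos : 0 < r := Real.sqrt_pos.mpr hxx
      have hy : (r⁻¹ • x) ⬝ᵥ (r⁻¹ • x) = 1 := by
        rw [smul_dotProduct, dotProduct_smul, smul_eq_mul, smul_eq_mul, ← mul_assoc, hr,
          ← Real.sqrt_mul_self hxx.le]
        field_simp
        rw [Real.sq_sqrt (Real.sqrt_nonneg _)]
      have hmem : (r⁻¹ • x) ∈ S := hy
      have hmin : g x₀ ≤ g (r⁻¹ • x) := hx₀min hmem
      have hgx : g x = r ^ 2 * g (r⁻¹ • x) := by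
        rw [← hhom r (r⁻¹ • x), smul_smul, mul_inv_cancel₀ hrpos.ne', one_smul]
      have hr2 : r ^ 2 = x ⬝ᵥ x := Real.sq_sqrt hxx.le
      rw [hgx, hr2]
      nlinarith

/-- Coercivity of the quadratic form attached to the Hilbert matrix. -/
lemma hilbert_coercive (m : ℕ) : ∃ lam : ℝ, 0 < lam ∧ ∀ a : Fin m → ℝ,
    lam * (a ⬝ᵥ a) ≤ ∑ i : Fin m, ∑ j : Fin m, a i * a j / (((i : ℕ) + (j : ℕ) + 1 : ℕ) : ℝ) := by
  set g : (Fin m → ℝ) → ℝ :=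
    fun a => ∑ i : Fin m, ∑ j : Fin m, a i * a j / (((i : ℕ) + (j : ℕ) + 1 : ℕ) : ℝ) with hg
  have key : ∀ a : Fin m → ℝ, g a = ∫ σ in (0:ℝ)..1, (∑ j : Fin m, a j * σ ^ (j : ℕ)) ^ 2 := by
    intro a
    have h1 : ∀ σ : ℝ, (∑ j : Fin m, a j * σ ^ (j : ℕ)) ^ 2
        = ∑ i : Fin m, ∑ j : Fin m, (a i * a j) * σ ^ ((i : ℕ) + (j : ℕ)) := by
      intro σ
      rw [sq, Finset.sum_mul_sum]
      apply Finset.sum_congr rfl; intro i _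
      apply Finset.sum_congr rfl; intro j _
      rw [pow_add]; ring
    simp_rw [h1]
    rw [intervalIntegral.integral_finset_sum]
    · apply Finset.sum_congr rfl; intro i _
      rw [intervalIntegral.integral_finset_sum]
      · apply Finset.sum_congr rfl; intro j _
        rw [intervalIntegral.integral_const_mul, integral_pow]
        push_cast
        ring
      · intro j _
        exact (continuous_const.mul (continuous_pow _)).intervalIntegrable 0 1
    · intro i _
      exact ((continuous_finset_sum _ fun j _ =>
        continuous_const.mul (continuous_pow _)).intervalIntegrable 0 1)
  obtain ⟨lam, hlam, hb⟩ := coercive_of_posOnSphere g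
    (by
      apply continuous_finset_sum; intro i _
      apply continuous_finset_sum; intro j _
      exact ((continuous_apply i).mul (continuous_apply j)).div_const _)
    (by
      intro a ha
      rw [key]
      set p : Polynomial ℝ := ∑ j : Fin m, Polynomial.monomial (j : ℕ) (a j) with hp
      have heval : ∀ σ : ℝ, p.eval σ = ∑ j : Fin m, a j * σ ^ (j : ℕ) := by
        intro σ; rw [hp, Polynomial.eval_finset_sum]; simp [Polynomial.eval_monomial]
      obtain ⟨j₀, hj₀⟩ := Function.ne_iff.mp ha
      have hpne : p ≠ 0 := by
        intro h
        have : p.coeff (j₀ : ℕ) = a j₀ := by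
          rw [hp, Polynomial.finset_sum_coeff]
          simp_rw [Polynomial.coeff_monomial]
          rw [Finset.sum_eq_single j₀]
          · simp
          · intro b _ hbne; simp [Fin.val_eq_val, hbne]
          · simp
        rw [h] at this; simp at this; exact hj₀ this.symm
      have hroots := Polynomial.finite_setOf_isRoot hpne
      have hIoo : (Set.Ioo (0:ℝ) 1).Infinite := Set.Ioo_infinite (by norm_num)
      obtain ⟨σ₀, hσ₀⟩ := (hIoo.diff hroots).nonempty
      have hσ₀mem : σ₀ ∈ Set.Ioo (0:ℝ) 1 := hσ₀.1
      set q : ℝ → ℝ := fun σ => (∑ j : Fin m, a j * σ ^ (j : ℕ)) ^ 2 with hqdef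
      have hqcont : Continuous q := by
        apply Continuous.pow
        exact continuous_finset_sum _ fun j _ => continuous_const.mul (continuous_pow _)
      have hqnn : (0 : ℝ → ℝ) ≤ q := fun σ => sq_nonneg _
      have hqpos : 0 < q σ₀ := by
        have h2 : q σ₀ = (p.eval σ₀) ^ 2 := by rw [hqdef, heval]
        rw [h2]
        have : p.eval σ₀ ≠ 0 := hσ₀.2
        positivity
      rw [intervalIntegral.integral_pos_iff_support_of_nonneg_ae
        (Filter.Eventually.of_forall hqnn) (hqcont.intervalIntegrable 0 1)]
      refine ⟨by norm_num, ?_⟩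
      have hUopen : IsOpen ({σ | q σ ≠ 0} ∩ Set.Ioo 0 1) :=
        (isOpen_ne_fun hqcont continuous_const).inter isOpen_Ioo
      have hσU : σ₀ ∈ {σ | q σ ≠ 0} ∩ Set.Ioo 0 1 := ⟨hqpos.ne', hσ₀mem⟩
      obtain ⟨ε, hε, hball⟩ := Metric.isOpen_iff.mp hUopen σ₀ hσU
      calc (0 : ENNReal) < MeasureTheory.volume (Metric.ball σ₀ ε) :=
            Metric.measure_ball_pos _ _ hε
        _ ≤ _ := by
            apply MeasureTheory.measure_mono
            intro x hx
            have := hball hx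
            exact ⟨this.1, Set.Ioo_subset_Ioc_self this.2⟩)
    (by
      intro r a
      rw [hg]
      simp only [Pi.smul_apply, smul_eq_mul, Finset.mul_sum]
      apply Finset.sum_congr rfl; intro i _
      apply Finset.sum_congr rfl; intro j _
      ring)
  exact ⟨lam, hlam, hb⟩

lemma continuous_RmulVec {n : ℕ} (R : Matrix (Fin n) (Fin n) ℝ) (X : Fin n → ℝ)
    {f : ℝ → Matrix (Fin n) (Fin n) ℝ} (hf : Continuous f) :
    Continuous fun s => R.mulVec ((f s).mulVec X) := by
  apply continuous_pi
  intro i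
  unfold Matrix.mulVec dotProduct
  apply continuous_finset_sum
  intro k _
  apply Continuous.mul continuous_const
  apply continuous_finset_sum
  intro l _
  exact (((continuous_apply l).comp ((continuous_apply k).comp hf))).mul continuous_const

lemma continuous_dot {n : ℕ} {u w : ℝ → Fin n → ℝ} (hu : Continuous u) (hw : Continuous w) :
    Continuous fun s => u s ⬝ᵥ w s := by
  unfold dotProduct
  exact continuous_finset_sum _ fun i _ =>
    ((continuous_apply i).comp hu).mul ((continuous_apply i).comp hw)

end Aux

/-! ### Matrix exponential estimates -/

section ExpBound

attribute [local instance] Matrix.linftyOpNormedAddCommGroup Matrix.linftyOpNormedRing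
  Matrix.linftyOpNormedAlgebra

lemma exp_param_continuous {n : ℕ} (A : Matrix (Fin n) (Fin n) ℝ) :
    Continuous (fun s : ℝ => NormedSpace.exp (s • A)) :=
  NormedSpace.exp_continuous.comp (continuous_id.smul continuous_const)

lemma exp_expand {n : ℕ} (R A : Matrix (Fin n) (Fin n) ℝ) (X : Fin n → ℝ) (s : ℝ) :
    R.mulVec ((NormedSpace.exp (s • A)).mulVec X)
      = ∑' j : ℕ, (s ^ j * ((j.factorial : ℝ))⁻¹) • R.mulVec ((A ^ j).mulVec X) := by
  classical
  let L : Matrix (Fin n) (Fin n) ℝ →ₗ[ℝ] (Fin n → ℝ) :=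
    { toFun := fun M => R.mulVec (M.mulVec X)
      map_add' := by
        intro M N
        show R.mulVec ((M + N).mulVec X) = _
        rw [Matrix.add_mulVec, Matrix.mulVec_add]
      map_smul' := by
        intro c M
        show R.mulVec ((c • M).mulVec X) = _
        rw [Matrix.smul_mulVec, Matrix.mulVec_smul]
        rfl }
  let Lc : Matrix (Fin n) (Fin n) ℝ →L[ℝ] (Fin n → ℝ) := LinearMap.toContinuousLinearMap L
  have h1 : R.mulVec ((NormedSpace.exp (s • A)).mulVec X) = Lc (NormedSpace.exp (s • A)) := rfl
  rw [h1, NormedSpace.exp_eq_tsum (𝕂 := ℝ)]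
  rw [Lc.map_tsum (NormedSpace.expSeries_summable' (s • A))]
  congr 1
  funext j
  have h2 : ((j.factorial : ℝ))⁻¹ • (s • A) ^ j = (s ^ j * ((j.factorial : ℝ))⁻¹) • A ^ j := by
    rw [smul_pow, smul_smul, mul_comm]
  rw [h2, Lc.map_smul]
  rfl

lemma exp_summable {n : ℕ} (R A : Matrix (Fin n) (Fin n) ℝ) (X : Fin n → ℝ) (s : ℝ) :
    Summable (fun j : ℕ => (s ^ j * ((j.factorial : ℝ))⁻¹) • R.mulVec ((A ^ j).mulVec X)) := by
  classical
  let L : Matrix (Fin n) (Fin n) ℝ →ₗ[ℝ] (Fin n → ℝ) :=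
    { toFun := fun M => R.mulVec (M.mulVec X)
      map_add' := by
        intro M N
        show R.mulVec ((M + N).mulVec X) = _
        rw [Matrix.add_mulVec, Matrix.mulVec_add]
      map_smul' := by
        intro c M
        show R.mulVec ((c • M).mulVec X) = _
        rw [Matrix.smul_mulVec, Matrix.mulVec_smul]
        rfl }
  let Lc : Matrix (Fin n) (Fin n) ℝ →L[ℝ] (Fin n → ℝ) := LinearMap.toContinuousLinearMap L
  have h := (NormedSpace.expSeries_summable' (𝕂 := ℝ) (s • A)).map Lc Lc.continuous
  convert h using 2 with j
  show _ = Lc (((j.factorial : ℝ))⁻¹ • (s • A) ^ j)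
  have h2 : ((j.factorial : ℝ))⁻¹ • (s • A) ^ j = (s ^ j * ((j.factorial : ℝ))⁻¹) • A ^ j := by
    rw [smul_pow, smul_smul, mul_comm]
  rw [h2, Lc.map_smul]
  rfl

lemma exp_tail_bound {n : ℕ} (R A : Matrix (Fin n) (Fin n) ℝ) (k : ℕ) :
    ∃ C : ℝ, 0 ≤ C ∧ ∀ s : ℝ, 0 ≤ s → s ≤ 1 → ∀ X : Fin n → ℝ,
      ‖R.mulVec ((NormedSpace.exp (s • A)).mulVec X)
        - ∑ j ∈ Finset.range (k + 1),
            (s ^ j * ((j.factorial : ℝ))⁻¹) • R.mulVec ((A ^ j).mulVec X)‖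
        ≤ C * s ^ (k + 1) * ‖X‖ := by
  classical
  set M : ℝ := max 1 ‖A‖ with hM
  have hM1 : (1:ℝ) ≤ M := le_max_left _ _
  have hM0 : (0:ℝ) < M := lt_of_lt_of_le one_pos hM1
  have hAM : ‖A‖ ≤ M := le_max_right _ _
  have hsum : Summable (fun i : ℕ => M ^ i / (i.factorial : ℝ)) :=
    Real.summable_pow_div_factorial M
  set E : ℝ := ∑' i : ℕ, M ^ i / (i.factorial : ℝ) with hE
  refine ⟨‖R‖ * M ^ (k + 1) * E, ?_, ?_⟩
  · have hE0 : 0 ≤ E := tsum_nonneg fun i => by positivity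
    positivity
  intro s hs0 hs1 X
  set w : ℕ → (Fin n → ℝ) := fun j => R.mulVec ((A ^ j).mulVec X) with hw
  set f : ℕ → (Fin n → ℝ) := fun j => (s ^ j * ((j.factorial : ℝ))⁻¹) • w j with hf
  have hfsum : Summable f := exp_summable R A X s
  have hsplit : ∑ j ∈ Finset.range (k + 1), f j + ∑' i : ℕ, f (i + (k + 1)) = ∑' j, f j :=
    hfsum.sum_add_tsum_nat_add (k + 1)
  have hdiff : R.mulVec ((NormedSpace.exp (s • A)).mulVec X)
      - ∑ j ∈ Finset.range (k + 1), f j = ∑' i : ℕ, f (i + (k + 1)) := by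
    rw [exp_expand R A X s, ← hsplit]; ring
  rw [hdiff]
  set g : ℕ → ℝ := fun i => (‖R‖ * ‖X‖ * (M ^ (k + 1) * s ^ (k + 1))) * (M ^ i / (i.factorial : ℝ))
    with hgdef
  have hgsum : Summable g := hsum.mul_left _
  have hbound : ∀ i : ℕ, ‖f (i + (k + 1))‖ ≤ g i := by
    intro i
    have hj : 0 < i + (k + 1) := by omega
    have h1 : ‖f (i + (k + 1))‖
        = s ^ (i + (k + 1)) * ((i + (k + 1)).factorial : ℝ)⁻¹ * ‖w (i + (k + 1))‖ := by
      rw [hf, norm_smul]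
      congr 1
      rw [Real.norm_eq_abs, abs_of_nonneg]
      positivity
    have h2 : ‖w (i + (k + 1))‖ ≤ ‖R‖ * (‖A‖ ^ (i + (k + 1)) * ‖X‖) := by
      calc ‖w (i + (k + 1))‖ ≤ ‖R‖ * ‖(A ^ (i + (k+1))).mulVec X‖ :=
            Matrix.linfty_opNorm_mulVec _ _
        _ ≤ ‖R‖ * (‖A ^ (i + (k+1))‖ * ‖X‖) :=
            mul_le_mul_of_nonneg_left (Matrix.linfty_opNorm_mulVec _ _) (norm_nonneg R)
        _ ≤ ‖R‖ * (‖A‖ ^ (i + (k+1)) * ‖X‖) := by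
            apply mul_le_mul_of_nonneg_left _ (norm_nonneg R)
            exact mul_le_mul_of_nonneg_right (norm_pow_le' A hj) (norm_nonneg X)
    have h3 : s ^ (i + (k + 1)) ≤ s ^ (k + 1) := by
      apply pow_le_pow_of_le_one hs0 hs1; omega
    have h4 : ‖A‖ ^ (i + (k + 1)) ≤ M ^ (k + 1) * M ^ i := by
      calc ‖A‖ ^ (i + (k + 1)) ≤ M ^ (i + (k + 1)) :=
            pow_le_pow_left₀ (norm_nonneg A) hAM _
        _ = M ^ (k + 1) * M ^ i := by rw [pow_add]; ring
    have h5 : ((i + (k + 1)).factorial : ℝ)⁻¹ ≤ ((i.factorial : ℝ))⁻¹ := by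
      apply inv_anti₀
      · exact_mod_cast Nat.factorial_pos i
      · exact_mod_cast Nat.factorial_le (by omega)
    rw [h1, hgdef]
    have hfact_nn : (0:ℝ) ≤ ((i + (k + 1)).factorial : ℝ)⁻¹ := by positivity
    calc s ^ (i + (k + 1)) * ((i + (k + 1)).factorial : ℝ)⁻¹ * ‖w (i + (k + 1))‖
        ≤ s ^ (k + 1) * ((i.factorial : ℝ))⁻¹ * (‖R‖ * (M ^ (k + 1) * M ^ i * ‖X‖)) := by
          apply mul_le_mul
          · exact mul_le_mul h3 h5 hfact_nn (by positivity)
          · calc ‖w (i + (k + 1))‖ ≤ ‖R‖ * (‖A‖ ^ (i + (k + 1)) * ‖X‖) := h2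
              _ ≤ ‖R‖ * (M ^ (k + 1) * M ^ i * ‖X‖) := by
                  apply mul_le_mul_of_nonneg_left _ (norm_nonneg R)
                  exact mul_le_mul_of_nonneg_right h4 (norm_nonneg X)
          · exact norm_nonneg _
          · positivity
      _ = (‖R‖ * ‖X‖ * (M ^ (k + 1) * s ^ (k + 1))) * (M ^ i / (i.factorial : ℝ)) := by
          field_simp
  have hnormsum : Summable (fun i : ℕ => ‖f (i + (k + 1))‖) :=
    Summable.of_nonneg_of_le (fun i => norm_nonneg _) hbound hgsum
  calc ‖∑' i : ℕ, f (i + (k + 1))‖ ≤ ∑' i : ℕ, ‖f (i + (k + 1))‖ :=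
        norm_tsum_le_tsum_norm hnormsum
    _ ≤ ∑' i : ℕ, g i := Summable.tsum_le_tsum hbound hnormsum hgsum
    _ = (‖R‖ * ‖X‖ * (M ^ (k + 1) * s ^ (k + 1))) * E := by rw [hgdef, tsum_mul_left]
    _ = ‖R‖ * M ^ (k + 1) * E * s ^ (k + 1) * ‖X‖ := by ring

end ExpBound

/-! ### Kalman rank condition -/

section Kalman

lemma kalman_injective {n : ℕ} {p : Type*} [Fintype p] (K : Matrix (Fin n) p ℝ)
    (h : K.rank = n) : Function.Injective Kᵀ.mulVec := by
  have h1 : Kᵀ.rank = n := by rw [Matrix.rank_transpose]; exact h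
  have h2 : LinearMap.ker Kᵀ.mulVecLin = ⊥ := by
    have h3 := Kᵀ.mulVecLin.finrank_range_add_finrank_ker
    rw [Matrix.rank] at h1
    rw [h1] at h3
    simp only [Module.finrank_fintype_fun_eq_card, Fintype.card_fin] at h3
    have hker : Module.finrank ℝ (LinearMap.ker Kᵀ.mulVecLin) = 0 := by omega
    exact Submodule.finrank_eq_zero.mp hker
  exact LinearMap.ker_eq_bot.mp h2

lemma kalman_dot {n : ℕ} (R B : Matrix (Fin n) (Fin n) ℝ) (hR : Rᵀ = R) (k : ℕ) (X : Fin n → ℝ) :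
    ((kalmanMatrix R B k)ᵀ.mulVec X) ⬝ᵥ ((kalmanMatrix R B k)ᵀ.mulVec X)
      = ∑ j : Fin (k+1),
          (R.mulVec ((Bᵀ ^ (j : ℕ)).mulVec X)) ⬝ᵥ (R.mulVec ((Bᵀ ^ (j : ℕ)).mulVec X)) := by
  have key : ∀ p : Fin (k+1) × Fin n, (kalmanMatrix R B k)ᵀ.mulVec X p
      = R.mulVec ((Bᵀ ^ (p.1 : ℕ)).mulVec X) p.2 := by
    intro p
    rw [Matrix.mulVec_mulVec]
    have hmat : R * Bᵀ ^ (p.1 : ℕ) = (B ^ (p.1 : ℕ) * R)ᵀ := by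
      rw [Matrix.transpose_mul, Matrix.transpose_pow, hR]
    rw [hmat]
    simp [Matrix.mulVec, dotProduct, kalmanMatrix, Matrix.transpose_apply, mul_comm]
  rw [dotProduct, Fintype.sum_prod_type]
  apply Finset.sum_congr rfl
  intro j _
  rw [dotProduct]
  apply Finset.sum_congr rfl
  intro i _
  rw [key (j, i)]

end Kalman

/-- if the Kalman rank condition holds, then there exist `c > 0` and
`0 < t₀ ≤ 1` such that for all `0 ≤ t ≤ t₀` and all `X ∈ ℝⁿ`,
`∫₀ᵗ |Q^{1/2} e^{sBᵀ} X|² ds ≥ c t^{2k₀+1} |X|²`, where `k₀` is the smallest integer with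
`Rank[Q^{1/2}, ..., B^{k₀}Q^{1/2}] = n`. -/
theorem stmt0 {n : ℕ} (Q B : Matrix (Fin n) (Fin n) ℝ) (hQ : Q.PosSemidef)
    (hKal : (kalmanMatrix hQ.sqrt B (n - 1)).rank = n)
    (k₀ : ℕ) (hk₀ : IsLeast {k : ℕ | (kalmanMatrix hQ.sqrt B k).rank = n} k₀) :
    ∃ c : ℝ, 0 < c ∧ ∃ t₀ : ℝ, 0 < t₀ ∧ t₀ ≤ 1 ∧
      ∀ t : ℝ, 0 ≤ t → t ≤ t₀ → ∀ X : Fin n → ℝ,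
        c * t ^ (2 * k₀ + 1) * (X ⬝ᵥ X) ≤
          ∫ s in (0:ℝ)..t,
            (hQ.sqrt.mulVec ((NormedSpace.exp (s • Bᵀ)).mulVec X)) ⬝ᵥ
              (hQ.sqrt.mulVec ((NormedSpace.exp (s • Bᵀ)).mulVec X)) := by
  classical
  set R : Matrix (Fin n) (Fin n) ℝ := hQ.sqrt with hRdef
  have hRsymm : Rᵀ = R := by
    rw [hRdef]
    unfold Matrix.PosSemidef.sqrt
    rw [← Matrix.conjTranspose_eq_transpose_of_trivial]
    simp [Matrix.conjTranspose_mul, Matrix.mul_assoc, Matrix.star_eq_conjTranspose,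
      Matrix.conjTranspose_eq_transpose_of_trivial]
  -- Kalman coercivity
  have hrank : (kalmanMatrix R B k₀).rank = n := hk₀.1
  have hinj : Function.Injective (kalmanMatrix R B k₀)ᵀ.mulVec :=
    kalman_injective _ hrank
  obtain ⟨δ, hδ, hδle⟩ := coercive_of_posOnSphere
    (fun X => ((kalmanMatrix R B k₀)ᵀ.mulVec X) ⬝ᵥ ((kalmanMatrix R B k₀)ᵀ.mulVec X))
    (by
      apply continuous_finset_sum
      intro p _
      have hc : Continuous fun X : Fin n → ℝ => (kalmanMatrix R B k₀)ᵀ.mulVec X p := by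
        unfold Matrix.mulVec dotProduct
        exact continuous_finset_sum _ fun l _ => continuous_const.mul (continuous_apply l)
      exact hc.mul hc)
    (by
      intro X hX
      apply aux_dot_self_pos
      intro h
      apply hX
      apply hinj
      rw [h, Matrix.mulVec_zero])
    (by
      intro r X
      rw [Matrix.mulVec_smul, smul_dotProduct, dotProduct_smul, smul_eq_mul, smul_eq_mul]
      ring)
  -- Hilbert coercivity
  obtain ⟨lam, hlam, hlamle⟩ := hilbert_coercive (k₀ + 1)
  -- tail bound
  obtain ⟨C, hC0, hCb⟩ := exp_tail_bound R Bᵀ k₀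
  -- constants
  set κ : ℝ := lam * δ / ((k₀.factorial : ℝ)) ^ 2 with hκdef
  have hκ : 0 < κ := by
    have : (0:ℝ) < (k₀.factorial : ℝ) := by exact_mod_cast k₀.factorial_pos
    positivity
  set NC : ℝ := (n : ℝ) * C ^ 2 with hNC
  have hNC0 : 0 ≤ NC := by positivity
  set t₀ : ℝ := min 1 (Real.sqrt (κ / (4 * NC + 1))) with ht₀def
  have ht₀pos : 0 < t₀ := by
    apply lt_min one_pos
    apply Real.sqrt_pos.mpr
    positivity
  have ht₀le1 : t₀ ≤ 1 := min_le_left _ _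
  have ht₀sq : NC * t₀ ^ 2 ≤ κ / 4 := by
    have h1 : t₀ ≤ Real.sqrt (κ / (4 * NC + 1)) := min_le_right _ _
    have h2 : t₀ ^ 2 ≤ κ / (4 * NC + 1) := by
      calc t₀ ^ 2 ≤ Real.sqrt (κ / (4 * NC + 1)) ^ 2 :=
            pow_le_pow_left₀ ht₀pos.le h1 2
        _ = κ / (4 * NC + 1) := Real.sq_sqrt (by positivity)
    have h3 : t₀ ^ 2 * (4 * NC + 1) ≤ κ := by
      rw [← le_div_iff₀ (by positivity)]
      exact h2
    nlinarith [sq_nonneg t₀]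
  refine ⟨κ / 4, by positivity, t₀, ht₀pos, ht₀le1, ?_⟩
  intro t ht0 htt₀ X
  -- setup
  set vv : ℕ → (Fin n → ℝ) := fun j => R.mulVec ((Bᵀ ^ j).mulVec X) with hvv
  set P : ℝ → (Fin n → ℝ) :=
    fun s => ∑ j ∈ Finset.range (k₀ + 1), (s ^ j * ((j.factorial : ℝ))⁻¹) • vv j with hP
  set F : ℝ → (Fin n → ℝ) :=
    fun s => R.mulVec ((NormedSpace.exp (s • Bᵀ)).mulVec X) with hF
  have hFcont : Continuous F := continuous_RmulVec R X (exp_param_continuous Bᵀ)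
  have hPcont : Continuous P := by
    apply continuous_finset_sum
    intro j _
    exact (((continuous_pow j).mul continuous_const).smul continuous_const)
  have hFFcont : Continuous fun s => F s ⬝ᵥ F s := continuous_dot hFcont hFcont
  have hPPcont : Continuous fun s => P s ⬝ᵥ P s := continuous_dot hPcont hPcont
  have hDcont : Continuous fun s => (F s - P s) ⬝ᵥ (F s - P s) :=
    continuous_dot (hFcont.sub hPcont) (hFcont.sub hPcont)
  -- pointwise lower bound
  have hpt : ∀ s : ℝ, (1/2) * (P s ⬝ᵥ P s) - ((F s - P s) ⬝ᵥ (F s - P s)) ≤ F s ⬝ᵥ F s := by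
    intro s
    have hexp : ∀ l : Fin n, (1/2) * (P s l * P s l) - ((F s l - P s l) * (F s l - P s l))
        ≤ F s l * F s l := by
      intro l
      nlinarith [sq_nonneg (F s l - P s l), sq_nonneg (F s l + P s l), sq_nonneg (P s l - 2 * F s l)]
    have h1 : (1/2) * (P s ⬝ᵥ P s) - ((F s - P s) ⬝ᵥ (F s - P s))
        = ∑ l : Fin n, ((1/2) * (P s l * P s l) - ((F s l - P s l) * (F s l - P s l))) := by
      rw [dotProduct, dotProduct, Finset.mul_sum, ← Finset.sum_sub_distrib]
      apply Finset.sum_congr rfl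
      intro l _
      simp [Pi.sub_apply]
    rw [h1, dotProduct]
    exact Finset.sum_le_sum fun l _ => hexp l
  -- integral of P ⬝ᵥ P : closed form
  have hPP : ∀ s : ℝ, P s ⬝ᵥ P s = ∑ i ∈ Finset.range (k₀ + 1), ∑ j ∈ Finset.range (k₀ + 1),
      (((i.factorial : ℝ))⁻¹ * ((j.factorial : ℝ))⁻¹ * (vv i ⬝ᵥ vv j)) * s ^ (i + j) := by
    intro s
    rw [dotProduct]
    have happ : ∀ l : Fin n, P s l
        = ∑ j ∈ Finset.range (k₀ + 1), (s ^ j * ((j.factorial : ℝ))⁻¹) * vv j l := by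
      intro l
      rw [hP]
      simp [Finset.sum_apply]
    have hterm : ∀ l : Fin n, P s l * P s l
        = ∑ i ∈ Finset.range (k₀ + 1), ∑ j ∈ Finset.range (k₀ + 1),
            ((s ^ i * ((i.factorial : ℝ))⁻¹) * vv i l) * ((s ^ j * ((j.factorial : ℝ))⁻¹) * vv j l) := by
      intro l
      rw [happ l, Finset.sum_mul_sum]
    simp_rw [hterm]
    rw [Finset.sum_comm]
    apply Finset.sum_congr rfl
    intro i _
    rw [Finset.sum_comm]
    apply Finset.sum_congr rfl
    intro j _
    have hdot : (vv i ⬝ᵥ vv j) = ∑ l : Fin n, vv i l * vv j l := rfl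
    have hterm2 : ∀ l : Fin n,
        ((s ^ i * ((i.factorial : ℝ))⁻¹) * vv i l) * ((s ^ j * ((j.factorial : ℝ))⁻¹) * vv j l)
        = ((s ^ i * ((i.factorial : ℝ))⁻¹) * (s ^ j * ((j.factorial : ℝ))⁻¹))
            * (vv i l * vv j l) := by
      intro l; ring
    simp_rw [hterm2]
    rw [← Finset.mul_sum, ← hdot]
    ring
  have hPPint : ∫ s in (0:ℝ)..t, P s ⬝ᵥ P s
      = ∑ i ∈ Finset.range (k₀ + 1), ∑ j ∈ Finset.range (k₀ + 1),
          (((i.factorial : ℝ))⁻¹ * ((j.factorial : ℝ))⁻¹ * (vv i ⬝ᵥ vv j))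
            * (t ^ (i + j + 1) / ((i + j + 1 : ℕ) : ℝ)) := by
    simp_rw [hPP]
    rw [intervalIntegral.integral_finset_sum]
    · apply Finset.sum_congr rfl
      intro i _
      rw [intervalIntegral.integral_finset_sum]
      · apply Finset.sum_congr rfl
        intro j _
        rw [intervalIntegral.integral_const_mul, integral_pow]
        push_cast
        ring
      · intro j _
        exact (continuous_const.mul (continuous_pow _)).intervalIntegrable 0 t
    · intro i _
      exact ((continuous_finset_sum _ fun j _ =>
        continuous_const.mul (continuous_pow _)).intervalIntegrable 0 t)
  -- lower bound for the integral of P ⬝ᵥ P via the Hilbert matrix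
  have ht1 : t ≤ 1 := le_trans htt₀ ht₀le1
  have hPPlow : κ * t ^ (2 * k₀ + 1) * (X ⬝ᵥ X) ≤ ∫ s in (0:ℝ)..t, P s ⬝ᵥ P s := by
    rw [hPPint]
    -- rewrite the double sum via the Hilbert quadratic form per coordinate
    set a : Fin n → Fin (k₀ + 1) → ℝ :=
      fun l j => t ^ (j : ℕ) * (((j : ℕ).factorial : ℝ))⁻¹ * vv (j : ℕ) l with ha
    have hs1 : ∑ i ∈ Finset.range (k₀ + 1), ∑ j ∈ Finset.range (k₀ + 1),
        (((i.factorial : ℝ))⁻¹ * ((j.factorial : ℝ))⁻¹ * (vv i ⬝ᵥ vv j))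
          * (t ^ (i + j + 1) / ((i + j + 1 : ℕ) : ℝ))
        = t * ∑ l : Fin n, ∑ i : Fin (k₀ + 1), ∑ j : Fin (k₀ + 1),
            a l i * a l j / ((((i : ℕ) + (j : ℕ) + 1 : ℕ)) : ℝ) := by
      have swap : ∑ l : Fin n, ∑ i : Fin (k₀ + 1), ∑ j : Fin (k₀ + 1),
          a l i * a l j / ((((i : ℕ) + (j : ℕ) + 1 : ℕ)) : ℝ)
          = ∑ i : Fin (k₀ + 1), ∑ j : Fin (k₀ + 1), ∑ l : Fin n,
              a l i * a l j / ((((i : ℕ) + (j : ℕ) + 1 : ℕ)) : ℝ) := by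
        rw [Finset.sum_comm]
        exact Finset.sum_congr rfl fun i _ => Finset.sum_comm
      rw [swap, Finset.mul_sum]
      rw [← Fin.sum_univ_eq_sum_range (fun i => ∑ j ∈ Finset.range (k₀ + 1),
        (((i.factorial : ℝ))⁻¹ * ((j.factorial : ℝ))⁻¹ * (vv i ⬝ᵥ vv j))
          * (t ^ (i + j + 1) / ((i + j + 1 : ℕ) : ℝ))) (k₀ + 1)]
      apply Finset.sum_congr rfl
      intro i _
      rw [Finset.mul_sum]
      rw [← Fin.sum_univ_eq_sum_range (fun j =>
        ((((i:ℕ).factorial : ℝ))⁻¹ * ((j.factorial : ℝ))⁻¹ * (vv (i:ℕ) ⬝ᵥ vv j))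
          * (t ^ ((i:ℕ) + j + 1) / (((i:ℕ) + j + 1 : ℕ) : ℝ))) (k₀ + 1)]
      apply Finset.sum_congr rfl
      intro j _
      have hterm : ∀ l : Fin n, a l i * a l j / ((((i : ℕ) + (j : ℕ) + 1 : ℕ)) : ℝ)
          = (t ^ (i:ℕ) * (((i:ℕ).factorial : ℝ))⁻¹ * (t ^ (j:ℕ) * (((j:ℕ).factorial : ℝ))⁻¹)
              / ((((i : ℕ) + (j : ℕ) + 1 : ℕ)) : ℝ)) * (vv (i:ℕ) l * vv (j:ℕ) l) := by
        intro l
        rw [ha]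
        ring
      simp_rw [hterm]
      rw [← Finset.mul_sum]
      have hdot : (vv (i:ℕ) ⬝ᵥ vv (j:ℕ)) = ∑ l : Fin n, vv (i:ℕ) l * vv (j:ℕ) l := rfl
      rw [← hdot]
      have hpow : t ^ ((i:ℕ) + (j:ℕ) + 1) = t * t ^ (i:ℕ) * t ^ (j:ℕ) := by
        rw [pow_add, pow_add]; ring
      rw [hpow]
      ring
    rw [hs1]
    -- apply the Hilbert bound for each coordinate
    have hhil : ∀ l : Fin n, lam * (a l ⬝ᵥ a l) ≤ ∑ i : Fin (k₀ + 1), ∑ j : Fin (k₀ + 1),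
        a l i * a l j / ((((i : ℕ) + (j : ℕ) + 1 : ℕ)) : ℝ) := fun l => hlamle (a l)
    have hsum1 : ∑ l : Fin n, lam * (a l ⬝ᵥ a l)
        ≤ ∑ l : Fin n, ∑ i : Fin (k₀ + 1), ∑ j : Fin (k₀ + 1),
            a l i * a l j / ((((i : ℕ) + (j : ℕ) + 1 : ℕ)) : ℝ) :=
      Finset.sum_le_sum fun l _ => hhil l
    -- compute Σ_l lam * (a l ⬝ᵥ a l)
    have hsum2 : ∑ l : Fin n, lam * (a l ⬝ᵥ a l)
        = lam * ∑ j : Fin (k₀ + 1),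
            (t ^ (j:ℕ) * (((j:ℕ).factorial : ℝ))⁻¹) ^ 2 * (vv (j:ℕ) ⬝ᵥ vv (j:ℕ)) := by
      rw [← Finset.mul_sum]
      congr 1
      have hdd : ∀ l : Fin n, (a l ⬝ᵥ a l) = ∑ j : Fin (k₀ + 1), a l j * a l j := fun l => rfl
      simp_rw [hdd]
      rw [Finset.sum_comm]
      apply Finset.sum_congr rfl
      intro j _
      have hdot : (vv (j:ℕ) ⬝ᵥ vv (j:ℕ)) = ∑ l : Fin n, vv (j:ℕ) l * vv (j:ℕ) l := rfl
      have hterm2 : ∀ l : Fin n, a l j * a l j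
          = ((t ^ (j:ℕ) * (((j:ℕ).factorial : ℝ))⁻¹) ^ 2) * (vv (j:ℕ) l * vv (j:ℕ) l) := by
        intro l; rw [ha]; ring
      simp_rw [hterm2]
      rw [← Finset.mul_sum, ← hdot]
    -- each diagonal term is at least t^(2k₀+1)/ (k₀!)² * (vv j ⬝ᵥ vv j)  … after mult by t
    have hterm : ∀ j : Fin (k₀ + 1),
        t ^ (2 * k₀) * (((k₀.factorial : ℝ))⁻¹) ^ 2 * (vv (j:ℕ) ⬝ᵥ vv (j:ℕ))
          ≤ (t ^ (j:ℕ) * (((j:ℕ).factorial : ℝ))⁻¹) ^ 2 * (vv (j:ℕ) ⬝ᵥ vv (j:ℕ)) := by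
      intro j
      apply mul_le_mul_of_nonneg_right _ (aux_dot_self_nonneg _)
      have h1 : t ^ (2 * k₀) ≤ (t ^ (j:ℕ)) ^ 2 * 1 := by
        rw [mul_one, ← pow_mul]
        apply pow_le_pow_of_le_one ht0 ht1
        have := j.2
        omega
      have h2 : (((k₀.factorial : ℝ))⁻¹) ^ 2 ≤ ((((j:ℕ).factorial : ℝ))⁻¹) ^ 2 := by
        apply pow_le_pow_left₀ (by positivity)
        apply inv_anti₀
        · exact_mod_cast (j:ℕ).factorial_pos
        · exact_mod_cast Nat.factorial_le (by have := j.2; omega)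
      calc t ^ (2 * k₀) * (((k₀.factorial : ℝ))⁻¹) ^ 2
          ≤ (t ^ (j:ℕ)) ^ 2 * ((((j:ℕ).factorial : ℝ))⁻¹) ^ 2 := by
            apply mul_le_mul _ h2 (by positivity) (by positivity)
            calc t ^ (2 * k₀) ≤ (t ^ (j:ℕ)) ^ 2 * 1 := h1
              _ = (t ^ (j:ℕ)) ^ 2 := by ring
        _ = (t ^ (j:ℕ) * (((j:ℕ).factorial : ℝ))⁻¹) ^ 2 := by ring
    -- Kalman bound : Σ_j vv j ⬝ᵥ vv j ≥ δ (X ⬝ᵥ X)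
    have hkal : δ * (X ⬝ᵥ X) ≤ ∑ j : Fin (k₀ + 1), (vv (j:ℕ) ⬝ᵥ vv (j:ℕ)) := by
      have h1 := hδle X
      rw [kalman_dot R B hRsymm k₀ X] at h1
      exact h1
    -- put everything together
    have hchain : κ * t ^ (2 * k₀ + 1) * (X ⬝ᵥ X)
        ≤ t * ∑ l : Fin n, lam * (a l ⬝ᵥ a l) := by
      rw [hsum2]
      have hstep : t ^ (2 * k₀) * (((k₀.factorial : ℝ))⁻¹) ^ 2 * (δ * (X ⬝ᵥ X))
          ≤ ∑ j : Fin (k₀ + 1), (t ^ (j:ℕ) * (((j:ℕ).factorial : ℝ))⁻¹) ^ 2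
              * (vv (j:ℕ) ⬝ᵥ vv (j:ℕ)) := by
        calc t ^ (2 * k₀) * (((k₀.factorial : ℝ))⁻¹) ^ 2 * (δ * (X ⬝ᵥ X))
            ≤ t ^ (2 * k₀) * (((k₀.factorial : ℝ))⁻¹) ^ 2
                * ∑ j : Fin (k₀ + 1), (vv (j:ℕ) ⬝ᵥ vv (j:ℕ)) := by
              apply mul_le_mul_of_nonneg_left hkal (by positivity)
          _ = ∑ j : Fin (k₀ + 1), t ^ (2 * k₀) * (((k₀.factorial : ℝ))⁻¹) ^ 2
                * (vv (j:ℕ) ⬝ᵥ vv (j:ℕ)) := by rw [Finset.mul_sum]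
          _ ≤ _ := Finset.sum_le_sum fun j _ => hterm j
      have hκeq : κ * t ^ (2 * k₀ + 1) * (X ⬝ᵥ X)
          = t * (lam * (t ^ (2 * k₀) * (((k₀.factorial : ℝ))⁻¹) ^ 2 * (δ * (X ⬝ᵥ X)))) := by
        rw [hκdef]
        have : (0:ℝ) < (k₀.factorial : ℝ) := by exact_mod_cast k₀.factorial_pos
        field_simp
        ring
      rw [hκeq]
      apply mul_le_mul_of_nonneg_left _ ht0
      exact mul_le_mul_of_nonneg_left hstep hlam.le
    calc κ * t ^ (2 * k₀ + 1) * (X ⬝ᵥ X) ≤ t * ∑ l : Fin n, lam * (a l ⬝ᵥ a l) := hchain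
      _ ≤ _ := mul_le_mul_of_nonneg_left hsum1 ht0
  -- upper bound for remainder integral
  have hDD : ∫ s in (0:ℝ)..t, (F s - P s) ⬝ᵥ (F s - P s) ≤ NC * t ^ 2 * t ^ (2*k₀+1) * (X ⬝ᵥ X) := by
    have hptD : ∀ s ∈ Set.Icc (0:ℝ) t, (F s - P s) ⬝ᵥ (F s - P s)
        ≤ (NC * (X ⬝ᵥ X)) * s ^ (2 * k₀ + 2) := by
      intro s hs
      have hs0 : 0 ≤ s := hs.1
      have hs1 : s ≤ 1 := le_trans hs.2 ht1
      have hnorm : ‖F s - P s‖ ≤ C * s ^ (k₀ + 1) * ‖X‖ := by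
        have := hCb s hs0 hs1 X
        simpa [hF, hP, hvv] using this
      have h1 : (F s - P s) ⬝ᵥ (F s - P s) ≤ (n : ℝ) * ‖F s - P s‖ ^ 2 :=
        aux_dot_le_card_norm _
      have h2 : ‖F s - P s‖ ^ 2 ≤ (C * s ^ (k₀ + 1) * ‖X‖) ^ 2 :=
        pow_le_pow_left₀ (norm_nonneg _) hnorm 2
      have h3 : ‖X‖ ^ 2 ≤ X ⬝ᵥ X := aux_norm_sq_le_dot X
      have h4 : (C * s ^ (k₀ + 1) * ‖X‖) ^ 2 = C ^ 2 * s ^ (2 * k₀ + 2) * ‖X‖ ^ 2 := by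
        have : (s ^ (k₀ + 1)) ^ 2 = s ^ (2 * k₀ + 2) := by
          rw [← pow_mul]
          congr 1
          omega
        rw [← this]
        ring
      calc (F s - P s) ⬝ᵥ (F s - P s) ≤ (n : ℝ) * ‖F s - P s‖ ^ 2 := h1
        _ ≤ (n : ℝ) * (C ^ 2 * s ^ (2 * k₀ + 2) * ‖X‖ ^ 2) := by
            apply mul_le_mul_of_nonneg_left _ (Nat.cast_nonneg n)
            rw [← h4]; exact h2
        _ ≤ (n : ℝ) * (C ^ 2 * s ^ (2 * k₀ + 2) * (X ⬝ᵥ X)) := by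
            apply mul_le_mul_of_nonneg_left _ (Nat.cast_nonneg n)
            apply mul_le_mul_of_nonneg_left h3 (by positivity)
        _ = (NC * (X ⬝ᵥ X)) * s ^ (2 * k₀ + 2) := by rw [hNC]; ring
    have hint1 : ∫ s in (0:ℝ)..t, (F s - P s) ⬝ᵥ (F s - P s)
        ≤ ∫ s in (0:ℝ)..t, (NC * (X ⬝ᵥ X)) * s ^ (2 * k₀ + 2) := by
      apply intervalIntegral.integral_mono_on ht0
        (hDcont.intervalIntegrable 0 t)
        ((continuous_const.mul (continuous_pow _)).intervalIntegrable 0 t)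
        hptD
    have hint2 : ∫ s in (0:ℝ)..t, (NC * (X ⬝ᵥ X)) * s ^ (2 * k₀ + 2)
        = (NC * (X ⬝ᵥ X)) * (t ^ (2 * k₀ + 3) / ((2 * k₀ + 3 : ℕ) : ℝ)) := by
      rw [intervalIntegral.integral_const_mul, integral_pow]
      push_cast
      ring_nf
    have hint3 : (NC * (X ⬝ᵥ X)) * (t ^ (2 * k₀ + 3) / ((2 * k₀ + 3 : ℕ) : ℝ))
        ≤ NC * t ^ 2 * t ^ (2*k₀+1) * (X ⬝ᵥ X) := by
      have hXX : 0 ≤ X ⬝ᵥ X := aux_dot_self_nonneg X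
      have htp : t ^ (2 * k₀ + 3) = t ^ 2 * t ^ (2 * k₀ + 1) := by
        rw [← pow_add]
        congr 1
        omega
      have hd : t ^ (2 * k₀ + 3) / ((2 * k₀ + 3 : ℕ) : ℝ) ≤ t ^ (2 * k₀ + 3) := by
        apply div_le_self (by positivity)
        exact_mod_cast Nat.one_le_iff_ne_zero.mpr (by omega)
      calc (NC * (X ⬝ᵥ X)) * (t ^ (2 * k₀ + 3) / ((2 * k₀ + 3 : ℕ) : ℝ))
          ≤ (NC * (X ⬝ᵥ X)) * t ^ (2 * k₀ + 3) :=
            mul_le_mul_of_nonneg_left hd (by positivity)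
        _ = NC * t ^ 2 * t ^ (2*k₀+1) * (X ⬝ᵥ X) := by rw [htp]; ring
    calc ∫ s in (0:ℝ)..t, (F s - P s) ⬝ᵥ (F s - P s)
        ≤ ∫ s in (0:ℝ)..t, (NC * (X ⬝ᵥ X)) * s ^ (2 * k₀ + 2) := hint1
      _ = (NC * (X ⬝ᵥ X)) * (t ^ (2 * k₀ + 3) / ((2 * k₀ + 3 : ℕ) : ℝ)) := hint2
      _ ≤ NC * t ^ 2 * t ^ (2*k₀+1) * (X ⬝ᵥ X) := hint3
  -- main chain
  have hmain : ∫ s in (0:ℝ)..t, F s ⬝ᵥ F s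
      ≥ (1/2) * (∫ s in (0:ℝ)..t, P s ⬝ᵥ P s) - ∫ s in (0:ℝ)..t, (F s - P s) ⬝ᵥ (F s - P s) := by
    have h1 : ∫ s in (0:ℝ)..t,
        ((1/2) * (P s ⬝ᵥ P s) - ((F s - P s) ⬝ᵥ (F s - P s)))
        ≤ ∫ s in (0:ℝ)..t, F s ⬝ᵥ F s := by
      apply intervalIntegral.integral_mono_on ht0
        (((continuous_const.mul hPPcont).sub hDcont).intervalIntegrable 0 t)
        (hFFcont.intervalIntegrable 0 t)
        (fun s _ => hpt s)
    have h2 : ∫ s in (0:ℝ)..t, ((1/2) * (P s ⬝ᵥ P s) - ((F s - P s) ⬝ᵥ (F s - P s)))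
        = (1/2) * (∫ s in (0:ℝ)..t, P s ⬝ᵥ P s)
          - ∫ s in (0:ℝ)..t, (F s - P s) ⬝ᵥ (F s - P s) := by
      rw [intervalIntegral.integral_sub
        ((hPPcont.intervalIntegrable 0 t).const_mul (1/2))
        (hDcont.intervalIntegrable 0 t),
        intervalIntegral.integral_const_mul]
    linarith [h1, h2.symm.le]
  -- conclude
  have hXX : 0 ≤ X ⬝ᵥ X := aux_dot_self_nonneg X
  have htpow : 0 ≤ t ^ (2*k₀+1) := by positivity
  have hlast : NC * t ^ 2 * t ^ (2*k₀+1) * (X ⬝ᵥ X) ≤ (κ/4) * t ^ (2*k₀+1) * (X ⬝ᵥ X) := by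
    have ht2 : t ^ 2 ≤ t₀ ^ 2 := pow_le_pow_left₀ ht0 htt₀ 2
    have h1 : NC * t ^ 2 ≤ κ / 4 := by
      calc NC * t ^ 2 ≤ NC * t₀ ^ 2 := mul_le_mul_of_nonneg_left ht2 hNC0
        _ ≤ κ / 4 := ht₀sq
    apply mul_le_mul_of_nonneg_right _ hXX
    exact mul_le_mul_of_nonneg_right h1 htpow
  have : (κ/4) * t ^ (2*k₀+1) * (X ⬝ᵥ X) ≤ ∫ s in (0:ℝ)..t, F s ⬝ᵥ F s := by
    have hhalf : (1/2) * (κ * t ^ (2 * k₀ + 1) * (X ⬝ᵥ X))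
        ≤ (1/2) * (∫ s in (0:ℝ)..t, P s ⬝ᵥ P s) := by
      apply mul_le_mul_of_nonneg_left hPPlow (by norm_num)
    calc (κ/4) * t ^ (2*k₀+1) * (X ⬝ᵥ X)
        = (1/2) * (κ * t ^ (2 * k₀ + 1) * (X ⬝ᵥ X))
          - (κ/4) * t ^ (2*k₀+1) * (X ⬝ᵥ X) := by ring
      _ ≤ (1/2) * (∫ s in (0:ℝ)..t, P s ⬝ᵥ P s)
          - ∫ s in (0:ℝ)..t, (F s - P s) ⬝ᵥ (F s - P s) := by
          have hDD2 := le_trans hDD hlast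
          exact sub_le_sub hhalf hDD2
      _ ≤ ∫ s in (0:ℝ)..t, F s ⬝ᵥ F s := hmain
  exact this
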